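/- Let w be a permutation of the positive integers with only finitely many non-fixed points, and let (i,j) and (i',j') be elements of the Rothe diagram RD(w) with i < i' and j < j'. Then (i' + j' − #{a < i' : w(a) < j'}) − (i + j − #{a < i : w(a) < j}) ≥ 2. -/

import Mathlib

/-- The simple transposition corresponding to the cell `(i, j)`, namely
`s_{i+j-1}`, swapping `i+j-1` and `i+j` (as a permutation of the positive integers). -/
def cellTrans (p : ℕ+ × ℕ+) : Equiv.Perm ℕ+ :=
  Equiv.swap (p.1 + p.2 - 1) (p.1 + p.2)

/-- Key used to order cells: rows increasing, and within a row, columns decreasing. -/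
def cellKey (p : ℕ+ × ℕ+) : Lex (ℕ+ × ℕ+ᵒᵈ) :=
  toLex (p.1, OrderDual.toDual p.2)

/-- The product of the simple transpositions `s_{i+j-1}` over the cells `(i,j)` of `D`,
taken with `i` increasing and, for fixed `i`, `j` decreasing. -/
def pdWord (D : Finset (ℕ+ × ℕ+)) : Equiv.Perm ℕ+ :=
  (((D.image cellKey).sort (· ≤ ·)).map
    (fun q => cellTrans ((ofLex q).1, OrderDual.ofDual (ofLex q).2))).prod

/-- The number of inversions of a permutation of the positive integers. -/
noncomputable def invNum (w : Equiv.Perm ℕ+) : ℕ :=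
  Set.ncard {p : ℕ+ × ℕ+ | p.1 < p.2 ∧ w p.2 < w p.1}

/-- `D` is a pipe dream (RC-graph) of `w`. -/
def IsPipeDream (w : Equiv.Perm ℕ+) (D : Finset (ℕ+ × ℕ+)) : Prop :=
  D.card = invNum w ∧ pdWord D = w

/-- The number of pipe dreams of `w`. -/
noncomputable def nu (w : Equiv.Perm ℕ+) : ℕ :=
  Set.ncard {D : Finset (ℕ+ × ℕ+) | IsPipeDream w D}

/-- The number of occurrences of the pattern 132 in `w`. -/
noncomputable def p132 (w : Equiv.Perm ℕ+) : ℕ :=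
  Set.ncard {t : ℕ+ × ℕ+ × ℕ+ |
    t.1 < t.2.1 ∧ t.2.1 < t.2.2 ∧ w t.1 < w t.2.2 ∧ w t.2.2 < w t.2.1}

/-- The number of occurrences of the pattern 1432 in `w`. -/
noncomputable def p1432 (w : Equiv.Perm ℕ+) : ℕ :=
  Set.ncard {t : ℕ+ × ℕ+ × ℕ+ × ℕ+ |
    t.1 < t.2.1 ∧ t.2.1 < t.2.2.1 ∧ t.2.2.1 < t.2.2.2 ∧
    w t.1 < w t.2.2.2 ∧ w t.2.2.2 < w t.2.2.1 ∧ w t.2.2.1 < w t.2.1}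

/-- `w` avoids the pattern 1432. -/
def Avoids1432 (w : Equiv.Perm ℕ+) : Prop :=
  ¬ ∃ a b c d : ℕ+, a < b ∧ b < c ∧ c < d ∧ w a < w d ∧ w d < w c ∧ w c < w b

/-- The Rothe diagram of `w`. -/
def RD (w : Equiv.Perm ℕ+) : Set (ℕ+ × ℕ+) :=
  {p | p.2 < w p.1 ∧ p.1 < w⁻¹ p.2}

/-- The Lehmer code of `w`: `code(w)_i = #{j > i : w(j) < w(i)}`. -/
noncomputable def lehmer (w : Equiv.Perm ℕ+) (i : ℕ+) : ℕ :=
  Set.ncard {j : ℕ+ | i < j ∧ w j < w i}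

/-- The bottom pipe dream `B_w = {(i,j) : 1 ≤ j ≤ code(w)_i}` (as a set of cells). -/
def bottomSet (w : Equiv.Perm ℕ+) : Set (ℕ+ × ℕ+) :=
  {p | (p.2 : ℕ) ≤ lehmer w p.1}

/-- The top pipe dream `T_w = {(i,j) : 1 ≤ i ≤ code(w⁻¹)_j}` (as a set of cells). -/
def topSet (w : Equiv.Perm ℕ+) : Set (ℕ+ × ℕ+) :=
  {p | (p.1 : ℕ) ≤ lehmer w⁻¹ p.2}

/-- `α(S)_m`: the number of cells of `S` on the diagonal `{(i,j) : i + j - 1 = m}`. -/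
noncomputable def diagCount (S : Set (ℕ+ × ℕ+)) : ℕ+ → ℕ :=
  fun m => Set.ncard {p | p ∈ S ∧ p.1 + p.2 = m + 1}

/-- Ladder move of order `k` taking `D` to `D'`: writing `i = i₀ + k + 1` (so `i₀ = i - k - 1`
and automatically `i ≥ k + 2`), it requires `(i,j) ∈ D`, `(i,j+1) ∉ D`, `(i₀,j) ∉ D`,
`(i₀,j+1) ∉ D`, and `(i',j), (i',j+1) ∈ D` for all `i - k ≤ i' < i`; it removes `(i,j)` and
adds `(i₀, j+1)`. -/
def LadderMove (k : ℕ) (D D' : Finset (ℕ+ × ℕ+)) : Prop :=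
  ∃ i₀ j : ℕ+,
    (i₀ + k.succPNat, j) ∈ D ∧
    (i₀ + k.succPNat, j + 1) ∉ D ∧
    (i₀, j) ∉ D ∧
    (i₀, j + 1) ∉ D ∧
    (∀ i' : ℕ+, i₀ < i' → i' < i₀ + k.succPNat → (i', j) ∈ D ∧ (i', j + 1) ∈ D) ∧
    D' = insert (i₀, j + 1) (D.erase (i₀ + k.succPNat, j))

private lemma fin_of_lt (n : ℕ+) (S : Set ℕ+) (h : ∀ a ∈ S, a < n) : S.Finite := by
  have hsub : S ⊆ (fun a : ℕ+ => (a : ℕ)) ⁻¹' (Set.Iio (n : ℕ)) := fun a ha => by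
    simpa using (h a ha)
  exact ((Set.finite_Iio (n : ℕ)).preimage (PNat.coe_injective.injOn)).subset hsub

private lemma ncard_le_Ioo (S : Set ℕ+) (g : ℕ+ → ℕ) (hg : Set.InjOn g S)
    (lo hi : ℕ) (h : ∀ a ∈ S, lo < g a ∧ g a < hi) : S.ncard ≤ hi - lo - 1 := by
  have h1 : g '' S ⊆ Set.Ioo lo hi := by rintro _ ⟨a, ha, rfl⟩; exact ⟨(h a ha).1, (h a ha).2⟩
  rw [← Set.ncard_image_of_injOn hg]
  calc (g '' S).ncard ≤ (Set.Ioo lo hi).ncard :=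
        Set.ncard_le_ncard h1 (Set.finite_Ioo lo hi)
    _ = hi - lo - 1 := by rw [← Finset.coe_Ioo, Set.ncard_coe_finset, Nat.card_Ioo]

private lemma ncard_le_Ico (S : Set ℕ+) (g : ℕ+ → ℕ) (hg : Set.InjOn g S)
    (lo hi : ℕ) (h : ∀ a ∈ S, lo ≤ g a ∧ g a < hi) : S.ncard ≤ hi - lo := by
  have h1 : g '' S ⊆ Set.Ico lo hi := by rintro _ ⟨a, ha, rfl⟩; exact ⟨(h a ha).1, (h a ha).2⟩
  rw [← Set.ncard_image_of_injOn hg]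
  calc (g '' S).ncard ≤ (Set.Ico lo hi).ncard :=
        Set.ncard_le_ncard h1 (Set.finite_Ico lo hi)
    _ = hi - lo := by rw [← Finset.coe_Ico, Set.ncard_coe_finset, Nat.card_Ico]

/-- diagonal numbers after left-justification differ by at least 2. -/
theorem diag_diff_ge_two (w : Equiv.Perm ℕ+)
    (hw : {x : ℕ+ | w x ≠ x}.Finite)
    (i j i' j' : ℕ+) (hij : (i, j) ∈ RD w) (hij' : (i', j') ∈ RD w)
    (hi : i < i') (hj : j < j') :
    ((((i' : ℕ) : ℤ) + ((j' : ℕ) : ℤ) - (Set.ncard {a : ℕ+ | a < i' ∧ w a < j'} : ℤ)) -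
      (((i : ℕ) : ℤ) + ((j : ℕ) : ℤ) - (Set.ncard {a : ℕ+ | a < i ∧ w a < j} : ℤ))) ≥ 2 := by
  obtain ⟨hij1, hij2⟩ := hij
  obtain ⟨hij'1, hij'2⟩ := hij'
  simp only at hij1 hij2 hij'1 hij'2
  set A : Set ℕ+ := {a : ℕ+ | a < i ∧ w a < j} with hAdef
  set A' : Set ℕ+ := {a : ℕ+ | a < i' ∧ w a < j'} with hA'def
  have hAfin : A.Finite := fin_of_lt i _ (fun a ha => ha.1)
  have hA'fin : A'.Finite := fin_of_lt i' _ (fun a ha => ha.1)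
  have hAA' : A ⊆ A' := fun a ha => ⟨ha.1.trans hi, ha.2.trans hj⟩
  have hsplit : (A' \ A).ncard + A.ncard = A'.ncard :=
    Set.ncard_diff_add_ncard_of_subset hAA' hA'fin
  set S1 : Set ℕ+ := {a : ℕ+ | i ≤ a ∧ a < i' ∧ w a < j'} with hS1def
  set S2 : Set ℕ+ := {a : ℕ+ | a < i ∧ j ≤ w a ∧ w a < j'} with hS2def
  have hS1fin : S1.Finite := fin_of_lt i' _ (fun a ha => ha.2.1)
  have hS2fin : S2.Finite := fin_of_lt i _ (fun a ha => ha.1)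
  have hsub : A' \ A ⊆ S1 ∪ S2 := by
    rintro a ⟨⟨ha1, ha2⟩, ha3⟩
    rcases le_or_gt i a with h | h
    · exact Or.inl ⟨h, ha1, ha2⟩
    · refine Or.inr ⟨h, ?_, ha2⟩
      by_contra hc
      exact ha3 ⟨h, lt_of_not_ge hc⟩
  have hd : (A' \ A).ncard ≤ S1.ncard + S2.ncard :=
    (Set.ncard_le_ncard hsub (hS1fin.union hS2fin)).trans (Set.ncard_union_le S1 S2)
  -- injectivity of a ↦ (w a : ℕ)
  have hwinj : Function.Injective (fun a : ℕ+ => ((w a : ℕ))) :=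
    PNat.coe_injective.comp w.injective
  -- a ∈ S2 → j < w a
  have hS2lt : ∀ a ∈ S2, (j : ℕ) < (w a : ℕ) ∧ ((w a : ℕ)) < j' := by
    intro a ha
    refine ⟨?_, (PNat.coe_lt_coe _ _).mpr ha.2.2⟩
    rcases lt_or_eq_of_le ha.2.1 with h | h
    · exact (PNat.coe_lt_coe _ _).mpr h
    · exfalso
      have : w⁻¹ j = a := by rw [h]; exact w.symm_apply_apply a
      rw [this] at hij2
      exact absurd (hij2.trans ha.1) (lt_irrefl i)
  have key : (A' \ A).ncard + (i : ℕ) + (j : ℕ) + 2 ≤ (i' : ℕ) + (j' : ℕ) := by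
    have hii : (i : ℕ) < (i' : ℕ) := (PNat.coe_lt_coe _ _).mpr hi
    have hjj : (j : ℕ) < (j' : ℕ) := (PNat.coe_lt_coe _ _).mpr hj
    rcases lt_or_ge (w i) j' with hcase | hcase
    · -- w i < j' : save on the column side
      have hs1 : S1.ncard ≤ (i' : ℕ) - i :=
        ncard_le_Ico S1 (fun a => (a : ℕ)) (PNat.coe_injective.injOn)
          (i : ℕ) (i' : ℕ) (fun a ha => ⟨(PNat.coe_le_coe _ _).mpr ha.1, (PNat.coe_lt_coe _ _).mpr ha.2.1⟩)
      have hiS2 : i ∉ S2 := fun h => absurd h.1 (lt_irrefl i)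
      have hins : (insert i S2).ncard = S2.ncard + 1 :=
        Set.ncard_insert_of_notMem hiS2 hS2fin
      have hs2' : (insert i S2).ncard ≤ (j' : ℕ) - j - 1 := by
        refine ncard_le_Ioo _ (fun a => ((w a : ℕ))) (hwinj.injOn) (j : ℕ) (j' : ℕ) ?_
        rintro a (rfl | ha)
        · exact ⟨(PNat.coe_lt_coe _ _).mpr hij1, (PNat.coe_lt_coe _ _).mpr hcase⟩
        · exact hS2lt a ha
      omega
    · -- j' ≤ w i : save on the row side
      have hiS1 : ∀ a ∈ S1, (i : ℕ) < a ∧ (a : ℕ) < i' := by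
        intro a ha
        refine ⟨?_, (PNat.coe_lt_coe _ _).mpr ha.2.1⟩
        rcases lt_or_eq_of_le ha.1 with h | h
        · exact (PNat.coe_lt_coe _ _).mpr h
        · exact absurd (h ▸ ha.2.2) (not_lt.mpr hcase)
      have hs1 : S1.ncard ≤ (i' : ℕ) - i - 1 :=
        ncard_le_Ioo S1 (fun a => (a : ℕ)) (PNat.coe_injective.injOn) (i : ℕ) (i' : ℕ) hiS1
      have hs2 : S2.ncard ≤ (j' : ℕ) - j - 1 :=
        ncard_le_Ioo S2 (fun a => ((w a : ℕ))) (hwinj.injOn) (j : ℕ) (j' : ℕ) hS2lt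
      omega
  omega
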